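/- Let f : ℝ → ℝ be 4-times continuously differentiable on a closed interval Ω containing [a - 3h/2, a + 3h/2], with h > 0. Define f̄(x) = (1/h)·∫_{x-h/2}^{x+h/2} f(t) dt and Δ²f̄(a) = f̄(a-h) - 2f̄(a) + f̄(a+h). Then |f(a) - (f̄(a) - (1/24)·Δ²f̄(a))| ≤ (3/640)·h⁴·sup_{x∈Ω} |f⁗(x)|. -/

import Mathlib

open Set MeasureTheory intervalIntegral

private lemma quart_ineq {v h : ℝ} (h0 : 0 ≤ v) (h1 : 2 * v ≤ h) :
    27 * v ^ 4 ≤ (v + h) ^ 4 := by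
  have h3 : (3 * v) ^ 4 ≤ (v + h) ^ 4 :=
    pow_le_pow_left₀ (by positivity) (by linarith) 4
  nlinarith [pow_nonneg h0 4]

private lemma ftc_within {F G : ℝ → ℝ} {l u c d : ℝ}
    (hc : c ∈ Icc l u) (hd : d ∈ Icc l u)
    (hF : ∀ x ∈ Icc l u, HasDerivWithinAt F (G x) (Icc l u) x)
    (hG : ContinuousOn G (Icc l u)) :
    ∫ x in c..d, G x = F d - F c := by
  have hsub : uIcc c d ⊆ Icc l u := uIcc_subset_Icc hc hd
  apply integral_eq_sub_of_hasDeriv_right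
  · exact fun x hx => ((hF x (hsub hx)).continuousWithinAt).mono hsub
  · intro x hx
    have hx' : x ∈ Icc l u :=
      ⟨(le_min hc.1 hd.1).trans hx.1.le, hx.2.le.trans (max_le hc.2 hd.2)⟩
    have hxu : x < u := lt_of_lt_of_le hx.2 (max_le hc.2 hd.2)
    exact (hF x hx').mono_of_mem_nhdsWithin (Icc_mem_nhdsGT_of_mem ⟨hx'.1, hxu⟩)
  · exact (hG.mono hsub).intervalIntegrable

private lemma bound_piece {k G : ℝ → ℝ} {c d M : ℝ} (hcd : c ≤ d)
    (hkc : Continuous k) (hGc : Continuous G)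
    (hknn : ∀ t ∈ Icc c d, 0 ≤ k t) (hGM : ∀ t ∈ Icc c d, |G t| ≤ M) :
    |∫ t in c..d, k t * G t| ≤ M * ∫ t in c..d, k t := by
  have h1 : |∫ t in c..d, k t * G t| ≤ ∫ t in c..d, |k t * G t| :=
    intervalIntegral.abs_integral_le_integral_abs hcd
  have h2 : ∫ t in c..d, |k t * G t| ≤ ∫ t in c..d, M * k t := by
    apply integral_mono_on hcd ((hkc.mul hGc).abs.intervalIntegrable _ _)
      ((continuous_const.mul hkc).intervalIntegrable _ _)
    intro t ht
    show |k t * G t| ≤ M * k t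
    rw [abs_mul, abs_of_nonneg (hknn t ht), mul_comm M (k t)]
    exact mul_le_mul_of_nonneg_left (hGM t ht) (hknn t ht)
  calc |∫ t in c..d, k t * G t| ≤ ∫ t in c..d, M * k t := h1.trans h2
    _ = M * ∫ t in c..d, k t := intervalIntegral.integral_const_mul M k

private lemma hasDerivAt_quint (e t : ℝ) :
    HasDerivAt (fun t => -(e - t) ^ 5 / 120) ((e - t) ^ 4 / 24) t := by
  have h1 : HasDerivAt (fun t : ℝ => e - t) (0 - 1) t :=
    (hasDerivAt_const t e).sub (hasDerivAt_id t)
  have h2 := ((h1.pow 5).neg).div_const 120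
  refine h2.congr_deriv ?_
  norm_num
  ring

private lemma integral_quart_div (c d e : ℝ) :
    ∫ t in c..d, (e - t) ^ 4 / 24 = (-(e - d) ^ 5 / 120) - (-(e - c) ^ 5 / 120) := by
  apply integral_eq_sub_of_hasDerivAt (fun t _ => hasDerivAt_quint e t)
  apply Continuous.intervalIntegrable
  fun_prop

private lemma integral_quart2 (c d e e' : ℝ) :
    ∫ t in c..d, ((e - t) ^ 4 - 27 * (e' - t) ^ 4) / 24
      = ((-(e - d) ^ 5 / 120) - (-(e - c) ^ 5 / 120))
        - 27 * ((-(e' - d) ^ 5 / 120) - (-(e' - c) ^ 5 / 120)) := by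
  have h : ∀ t : ℝ, HasDerivAt (fun t => -(e - t) ^ 5 / 120 - 27 * (-(e' - t) ^ 5 / 120))
      (((e - t) ^ 4 - 27 * (e' - t) ^ 4) / 24) t := by
    intro t
    have := (hasDerivAt_quint e t).sub ((hasDerivAt_quint e' t).const_mul 27)
    refine this.congr_deriv ?_
    ring
  rw [integral_eq_sub_of_hasDerivAt (fun t _ => h t) (by apply Continuous.intervalIntegrable; fun_prop)]
  ring

set_option maxHeartbeats 2000000 in
theorem stmt7 (f : ℝ → ℝ) (a h l u : ℝ) (hh : 0 < h)
    (hsub : Set.Icc (a - 3 * h / 2) (a + 3 * h / 2) ⊆ Set.Icc l u)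
    (hf : ContDiffOn ℝ 4 f (Set.Icc l u))
    (fb : ℝ → ℝ)
    (hfb : ∀ x, fb x = (1 / h) * ∫ t in (x - h / 2)..(x + h / 2), f t) :
    |f a - (fb a - (1 / 24) * (fb (a - h) - 2 * fb a + fb (a + h)))|
      ≤ (3 / 640) * h ^ 4
          * ⨆ x : Set.Icc l u, |iteratedDerivWithin 4 f (Set.Icc l u) x| := by
  set s : Set ℝ := Set.Icc l u with hsdef
  have hm3 : a - 3 * h / 2 ∈ s := hsub ⟨le_refl _, by linarith⟩
  have hp3 : a + 3 * h / 2 ∈ s := hsub ⟨by linarith, le_refl _⟩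
  have hm1 : a - h / 2 ∈ s := hsub ⟨by linarith, by linarith⟩
  have hp1 : a + h / 2 ∈ s := hsub ⟨by linarith, by linarith⟩
  have ha : a ∈ s := hsub ⟨by linarith, by linarith⟩
  have hlu : l ≤ u := ha.1.trans ha.2
  have hlu' : l < u := lt_of_le_of_lt hm3.1 (lt_of_lt_of_le (by linarith) hp3.2)
  have hsu : UniqueDiffOn ℝ s := uniqueDiffOn_Icc hlu'
  set g : ℝ → ℝ := iteratedDerivWithin 4 f s with hgdef
  have hgc : ContinuousOn g s := hf.continuousOn_iteratedDerivWithin (by norm_num) hsu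
  set G : ℝ → ℝ := Set.IccExtend hlu (s.restrict g) with hGdef
  have hGg : ∀ x ∈ s, G x = g x := fun x hx => Set.IccExtend_of_mem hlu _ hx
  have hGc : Continuous G := Continuous.Icc_extend' (continuousOn_iff_continuous_restrict.mp hgc)
  obtain ⟨C, hC⟩ := (isCompact_Icc : IsCompact s).exists_bound_of_continuousOn hgc
  have hbdd : BddAbove (Set.range fun x : s => |g (x : ℝ)|) := by
    refine ⟨C, ?_⟩
    rintro y ⟨x, rfl⟩
    simpa [Real.norm_eq_abs] using hC x x.2
  set M : ℝ := ⨆ x : s, |g (x : ℝ)| with hMdef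
  have hgM : ∀ x ∈ s, |g x| ≤ M := fun x hx => le_ciSup hbdd ⟨x, hx⟩
  have hM0 : 0 ≤ M := le_trans (abs_nonneg _) (hgM a ha)
  have hGM : ∀ x ∈ s, |G x| ≤ M := fun x hx => by rw [hGg x hx]; exact hgM x hx
  set c0 := iteratedDerivWithin 0 f s a with hc0
  set c1 := iteratedDerivWithin 1 f s a with hc1
  set c2 := iteratedDerivWithin 2 f s a with hc2
  set c3 := iteratedDerivWithin 3 f s a with hc3
  set P : ℝ → ℝ := fun x => c0 + c1 * (x - a) + c2 / 2 * (x - a) ^ 2 + c3 / 6 * (x - a) ^ 3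
    with hPdef
  set R : ℝ → ℝ := fun x => ∫ y in a..x, (x - y) ^ 3 / 6 * G y with hRdef
  have key : ∀ x ∈ s, f x = P x + R x := by
    intro x hx
    have hf3 : ContDiffOn ℝ (3 : ℕ) f s := hf.of_le (by norm_num)
    have hd3 : DifferentiableOn ℝ (iteratedDerivWithin 3 f s) s :=
      hf.differentiableOn_iteratedDerivWithin (by norm_num) hsu
    have hTders : ∀ y ∈ s, HasDerivWithinAt (fun t => taylorWithinEval f 3 s t x)
        ((x - y) ^ 3 / 6 * g y) s y := by
      intro y hy
      have h0 := hasDerivWithinAt_taylorWithinEval (n := 3) (x := x) hsu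
        self_mem_nhdsWithin hy (subset_refl _) hf3 (hd3 y hy)
      refine h0.congr_deriv ?_
      have h6 : ((Nat.factorial 3 : ℕ) : ℝ) = 6 := by norm_num [Nat.factorial]
      rw [smul_eq_mul, ← hgdef, h6]
      ring
    have hint : ∫ y in a..x, (x - y) ^ 3 / 6 * g y
        = taylorWithinEval f 3 s x x - taylorWithinEval f 3 s a x := by
      apply ftc_within ha hx hTders
      apply ContinuousOn.mul _ hgc
      fun_prop
    have ht_self : taylorWithinEval f 3 s x x = f x := taylorWithinEval_self f 3 s x
    have ht_a : taylorWithinEval f 3 s a x = P x := by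
      rw [taylor_within_apply]
      simp only [Finset.sum_range_succ, Finset.sum_range_zero, smul_eq_mul, zero_add]
      simp only [← hc0, ← hc1, ← hc2, ← hc3, hPdef]
      norm_num [Nat.factorial]
      ring
    have hcongr : R x = ∫ y in a..x, (x - y) ^ 3 / 6 * g y := by
      simp only [hRdef]
      apply intervalIntegral.integral_congr
      intro y hy
      show (x - y) ^ 3 / 6 * G y = (x - y) ^ 3 / 6 * g y
      rw [hGg y (uIcc_subset_Icc ha hx hy)]
    rw [hcongr, hint, ht_self, ht_a]
    ring
  set H : ℕ → ℝ → ℝ := fun m x => ∫ t in a..x, t ^ m * G t with hHdef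
  have hHder : ∀ (m : ℕ) (x : ℝ), HasDerivAt (H m) (x ^ m * G x) x := by
    intro m x
    exact (((continuous_pow m).mul hGc).integral_hasStrictDerivAt a x).hasDerivAt
  have hHcont : ∀ m : ℕ, Continuous (H m) :=
    fun m => continuous_iff_continuousAt.2 fun x => (hHder m x).continuousAt
  set Q : ℝ → ℝ := fun x => ∫ t in a..x, (x - t) ^ 4 / 24 * G t with hQdef
  have hGint : ∀ (p : ℝ → ℝ), Continuous p → ∀ c d : ℝ,
      IntervalIntegrable (fun t => p t * G t) volume c d :=
    fun p hp c d => (hp.mul hGc).intervalIntegrable c d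
  have hReq : ∀ x, R x = (x ^ 3 * H 0 x - 3 * (x ^ 2 * H 1 x) + 3 * (x * H 2 x) - H 3 x) / 6 := by
    intro x
    have e : ∀ t : ℝ, (x - t) ^ 3 / 6 * G t
        = (x ^ 3 / 6 * (t ^ 0 * G t) + (-3) * x ^ 2 / 6 * (t ^ 1 * G t))
          + (3 * x / 6 * (t ^ 2 * G t) + (-1) / 6 * (t ^ 3 * G t)) := by
      intro t; ring
    have i0 := (hGint _ (continuous_pow 0) a x).const_mul (x ^ 3 / 6)
    have i1 := (hGint _ (continuous_pow 1) a x).const_mul ((-3) * x ^ 2 / 6)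
    have i2 := (hGint _ (continuous_pow 2) a x).const_mul (3 * x / 6)
    have i3 := (hGint _ (continuous_pow 3) a x).const_mul ((-1) / 6)
    simp only [hRdef]
    rw [intervalIntegral.integral_congr (g := fun t =>
        (x ^ 3 / 6 * (t ^ 0 * G t) + (-3) * x ^ 2 / 6 * (t ^ 1 * G t))
          + (3 * x / 6 * (t ^ 2 * G t) + (-1) / 6 * (t ^ 3 * G t))) (fun t _ => e t)]
    rw [intervalIntegral.integral_add (i0.add i1) (i2.add i3),
      intervalIntegral.integral_add i0 i1, intervalIntegral.integral_add i2 i3]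
    simp only [intervalIntegral.integral_const_mul, hHdef]
    ring
  have hQeq : ∀ x, Q x = (x ^ 4 * H 0 x - 4 * (x ^ 3 * H 1 x) + 6 * (x ^ 2 * H 2 x)
      - 4 * (x * H 3 x) + H 4 x) / 24 := by
    intro x
    have e : ∀ t : ℝ, (x - t) ^ 4 / 24 * G t
        = ((x ^ 4 / 24 * (t ^ 0 * G t) + (-4) * x ^ 3 / 24 * (t ^ 1 * G t))
          + (6 * x ^ 2 / 24 * (t ^ 2 * G t) + (-4) * x / 24 * (t ^ 3 * G t)))
          + 1 / 24 * (t ^ 4 * G t) := by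
      intro t; ring
    have i0 := (hGint _ (continuous_pow 0) a x).const_mul (x ^ 4 / 24)
    have i1 := (hGint _ (continuous_pow 1) a x).const_mul ((-4) * x ^ 3 / 24)
    have i2 := (hGint _ (continuous_pow 2) a x).const_mul (6 * x ^ 2 / 24)
    have i3 := (hGint _ (continuous_pow 3) a x).const_mul ((-4) * x / 24)
    have i4 := (hGint _ (continuous_pow 4) a x).const_mul (1 / 24)
    simp only [hQdef]
    rw [intervalIntegral.integral_congr (g := fun t =>
        ((x ^ 4 / 24 * (t ^ 0 * G t) + (-4) * x ^ 3 / 24 * (t ^ 1 * G t))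
          + (6 * x ^ 2 / 24 * (t ^ 2 * G t) + (-4) * x / 24 * (t ^ 3 * G t)))
          + 1 / 24 * (t ^ 4 * G t)) (fun t _ => e t)]
    rw [intervalIntegral.integral_add ((i0.add i1).add (i2.add i3)) i4,
      intervalIntegral.integral_add (i0.add i1) (i2.add i3),
      intervalIntegral.integral_add i0 i1, intervalIntegral.integral_add i2 i3]
    simp only [intervalIntegral.integral_const_mul, hHdef]
    ring
  have hQder : ∀ x, HasDerivAt Q (R x) x := by
    have hQfun : Q = fun y => (y ^ 4 * H 0 y - 4 * (y ^ 3 * H 1 y) + 6 * (y ^ 2 * H 2 y)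
        - 4 * (y * H 3 y) + H 4 y) / 24 := funext hQeq
    intro x
    rw [hQfun, hReq x]
    have w1 := (hasDerivAt_pow 4 x).mul (hHder 0 x)
    have w2 := HasDerivAt.const_mul 4 ((hasDerivAt_pow 3 x).mul (hHder 1 x))
    have w3 := HasDerivAt.const_mul 6 ((hasDerivAt_pow 2 x).mul (hHder 2 x))
    have w4 := HasDerivAt.const_mul 4 ((hasDerivAt_id x).mul (hHder 3 x))
    have D := ((((w1.sub w2).add w3).sub w4).add (hHder 4 x)).div_const 24
    refine D.congr_deriv ?_
    push_cast
    norm_num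
    ring
  have hRcont : Continuous R := by
    have : R = fun x => (x ^ 3 * H 0 x - 3 * (x ^ 2 * H 1 x) + 3 * (x * H 2 x) - H 3 x) / 6 :=
      funext hReq
    rw [this]
    exact (((((continuous_pow 3).mul (hHcont 0)).sub
      (continuous_const.mul ((continuous_pow 2).mul (hHcont 1)))).add
      (continuous_const.mul (continuous_id.mul (hHcont 2))) |>.sub (hHcont 3))).div_const 6
  have hQRsub : ∀ c d : ℝ, ∫ x in c..d, R x = Q d - Q c := fun c d =>
    integral_eq_sub_of_hasDerivAt (fun x _ => hQder x) (hRcont.intervalIntegrable c d)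
  set PP : ℝ → ℝ := fun x => c0 * (x - a) + c1 / 2 * (x - a) ^ 2 + c2 / 6 * (x - a) ^ 3
      + c3 / 24 * (x - a) ^ 4 with hPPdef
  have hPcont : Continuous P := by
    rw [hPdef]
    fun_prop
  have hPPder : ∀ x, HasDerivAt PP (P x) x := by
    intro x
    have hxa : HasDerivAt (fun x : ℝ => x - a) 1 x := (hasDerivAt_id x).sub_const a
    have e1 := HasDerivAt.const_mul c0 hxa
    have e2 := HasDerivAt.const_mul (c1 / 2) (hxa.pow 2)
    have e3 := HasDerivAt.const_mul (c2 / 6) (hxa.pow 3)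
    have e4 := HasDerivAt.const_mul (c3 / 24) (hxa.pow 4)
    have D := ((e1.add e2).add e3).add e4
    rw [hPPdef, hPdef]
    refine D.congr_deriv ?_
    push_cast
    norm_num
    ring
  have hPsub : ∀ c d : ℝ, ∫ x in c..d, P x = PP d - PP c := fun c d =>
    integral_eq_sub_of_hasDerivAt (fun x _ => hPPder x) (hPcont.intervalIntegrable c d)
  have hfint : ∀ c d : ℝ, c ∈ s → d ∈ s →
      ∫ t in c..d, f t = (PP d - PP c) + (Q d - Q c) := by
    intro c d hc hd
    have h1 : ∫ t in c..d, f t = ∫ t in c..d, (P t + R t) :=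
      intervalIntegral.integral_congr fun t ht => key t (uIcc_subset_Icc hc hd ht)
    rw [h1, intervalIntegral.integral_add (hPcont.intervalIntegrable _ _)
      (hRcont.intervalIntegrable _ _), hPsub, hQRsub]
  have hRa : R a = 0 := by simp only [hRdef]; exact intervalIntegral.integral_same
  have hfa : f a = c0 := by
    rw [key a ha, hRa, hPdef]
    ring
  have hEeq : f a - (fb a - 1 / 24 * (fb (a - h) - 2 * fb a + fb (a + h)))
      = (Q (a + 3 * h / 2) - Q (a - 3 * h / 2)
          - 27 * (Q (a + h / 2) - Q (a - h / 2))) / (24 * h) := by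
    have h1 : fb (a - h) = (1 / h) * ((PP (a - h / 2) - PP (a - 3 * h / 2))
        + (Q (a - h / 2) - Q (a - 3 * h / 2))) := by
      rw [hfb, show a - h - h / 2 = a - 3 * h / 2 by ring,
        show a - h + h / 2 = a - h / 2 by ring, hfint _ _ hm3 hm1]
    have h2 : fb a = (1 / h) * ((PP (a + h / 2) - PP (a - h / 2))
        + (Q (a + h / 2) - Q (a - h / 2))) := by
      rw [hfb, hfint _ _ hm1 hp1]
    have h3 : fb (a + h) = (1 / h) * ((PP (a + 3 * h / 2) - PP (a + h / 2))
        + (Q (a + 3 * h / 2) - Q (a + h / 2))) := by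
      rw [hfb, show a + h - h / 2 = a + h / 2 by ring,
        show a + h + h / 2 = a + 3 * h / 2 by ring, hfint _ _ hp1 hp3]
    rw [h1, h2, h3, hfa]
    simp only [hPPdef]
    have hne : h ≠ 0 := ne_of_gt hh
    field_simp
    ring
  -- kernel splitting
  have iw3 : ∀ c d : ℝ, IntervalIntegrable (fun t => (a + 3 * h / 2 - t) ^ 4 / 24 * G t) volume c d :=
    fun c d => hGint _ (by fun_prop) c d
  have iwm3 : ∀ c d : ℝ, IntervalIntegrable (fun t => (a - 3 * h / 2 - t) ^ 4 / 24 * G t) volume c d :=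
    fun c d => hGint _ (by fun_prop) c d
  have S1 : Q (a + 3 * h / 2) = (∫ t in a..(a + h / 2), (a + 3 * h / 2 - t) ^ 4 / 24 * G t)
      + ∫ t in (a + h / 2)..(a + 3 * h / 2), (a + 3 * h / 2 - t) ^ 4 / 24 * G t := by
    simp only [hQdef]
    exact (intervalIntegral.integral_add_adjacent_intervals (iw3 _ _) (iw3 _ _)).symm
  have S2 : Q (a - 3 * h / 2) = (∫ t in a..(a - h / 2), (a - 3 * h / 2 - t) ^ 4 / 24 * G t)
      + ∫ t in (a - h / 2)..(a - 3 * h / 2), (a - 3 * h / 2 - t) ^ 4 / 24 * G t := by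
    simp only [hQdef]
    exact (intervalIntegral.integral_add_adjacent_intervals (iwm3 _ _) (iwm3 _ _)).symm
  have C3 : (∫ t in a..(a + h / 2), (a + 3 * h / 2 - t) ^ 4 / 24 * G t) - 27 * Q (a + h / 2)
      = ∫ t in a..(a + h / 2), ((a + 3 * h / 2 - t) ^ 4 - 27 * (a + h / 2 - t) ^ 4) / 24 * G t := by
    simp only [hQdef]
    rw [← intervalIntegral.integral_const_mul, ← intervalIntegral.integral_sub (iw3 _ _)
      ((hGint _ (by fun_prop) a (a + h / 2)).const_mul 27)]
    exact intervalIntegral.integral_congr fun t _ => by ring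
  have C2 : (∫ t in a..(a - h / 2), (a - 3 * h / 2 - t) ^ 4 / 24 * G t) - 27 * Q (a - h / 2)
      = ∫ t in a..(a - h / 2), ((a - 3 * h / 2 - t) ^ 4 - 27 * (a - h / 2 - t) ^ 4) / 24 * G t := by
    simp only [hQdef]
    rw [← intervalIntegral.integral_const_mul, ← intervalIntegral.integral_sub (iwm3 _ _)
      ((hGint _ (by fun_prop) a (a - h / 2)).const_mul 27)]
    exact intervalIntegral.integral_congr fun t _ => by ring
  -- the four pieces, with bounds
  have e3 : |∫ t in a..(a + h / 2), ((a + 3 * h / 2 - t) ^ 4 - 27 * (a + h / 2 - t) ^ 4) / 24 * G t|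
      ≤ M * (23 * h ^ 5 / 480) := by
    have hb := bound_piece (k := fun t => ((a + 3 * h / 2 - t) ^ 4 - 27 * (a + h / 2 - t) ^ 4) / 24)
      (G := G) (M := M) (show a ≤ a + h / 2 by linarith) (by fun_prop) hGc
      (fun t ht => by
        show 0 ≤ ((a + 3 * h / 2 - t) ^ 4 - 27 * (a + h / 2 - t) ^ 4) / 24
        have hv0 : 0 ≤ a + h / 2 - t := by linarith [ht.2]
        have hv1 : 2 * (a + h / 2 - t) ≤ h := by linarith [ht.1]
        have := quart_ineq hv0 hv1
        have e : a + 3 * h / 2 - t = (a + h / 2 - t) + h := by ring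
        rw [e]
        have : 0 ≤ ((a + h / 2 - t) + h) ^ 4 - 27 * (a + h / 2 - t) ^ 4 := by linarith
        linarith)
      (fun t ht => hGM t ⟨ha.1.trans ht.1, ht.2.trans hp1.2⟩)
    have hval : ∫ t in a..(a + h / 2), ((a + 3 * h / 2 - t) ^ 4 - 27 * (a + h / 2 - t) ^ 4) / 24
        = 23 * h ^ 5 / 480 := by
      rw [integral_quart2]; ring
    rw [hval] at hb
    exact hb
  have e4 : |∫ t in (a + h / 2)..(a + 3 * h / 2), (a + 3 * h / 2 - t) ^ 4 / 24 * G t|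
      ≤ M * (h ^ 5 / 120) := by
    have hb := bound_piece (k := fun t => (a + 3 * h / 2 - t) ^ 4 / 24) (G := G) (M := M)
      (show a + h / 2 ≤ a + 3 * h / 2 by linarith) (by fun_prop) hGc
      (fun t ht => by
        show 0 ≤ (a + 3 * h / 2 - t) ^ 4 / 24
        positivity)
      (fun t ht => hGM t ⟨hp1.1.trans ht.1, ht.2.trans hp3.2⟩)
    have hval : ∫ t in (a + h / 2)..(a + 3 * h / 2), (a + 3 * h / 2 - t) ^ 4 / 24
        = h ^ 5 / 120 := by
      rw [integral_quart_div]; ring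
    rw [hval] at hb
    exact hb
  have e2 : |∫ t in a..(a - h / 2), ((a - 3 * h / 2 - t) ^ 4 - 27 * (a - h / 2 - t) ^ 4) / 24 * G t|
      ≤ M * (23 * h ^ 5 / 480) := by
    rw [show (∫ t in a..(a - h / 2), ((a - 3 * h / 2 - t) ^ 4 - 27 * (a - h / 2 - t) ^ 4) / 24 * G t)
      = -(∫ t in (a - h / 2)..a, ((a - 3 * h / 2 - t) ^ 4 - 27 * (a - h / 2 - t) ^ 4) / 24 * G t)
      from intervalIntegral.integral_symm _ _, abs_neg]
    have hb := bound_piece (k := fun t => ((a - 3 * h / 2 - t) ^ 4 - 27 * (a - h / 2 - t) ^ 4) / 24)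
      (G := G) (M := M) (show a - h / 2 ≤ a by linarith) (by fun_prop) hGc
      (fun t ht => by
        show 0 ≤ ((a - 3 * h / 2 - t) ^ 4 - 27 * (a - h / 2 - t) ^ 4) / 24
        have hv0 : 0 ≤ t - (a - h / 2) := by linarith [ht.1]
        have hv1 : 2 * (t - (a - h / 2)) ≤ h := by linarith [ht.2]
        have := quart_ineq hv0 hv1
        have e : (a - 3 * h / 2 - t) ^ 4 = ((t - (a - h / 2)) + h) ^ 4 := by ring
        have e' : (a - h / 2 - t) ^ 4 = (t - (a - h / 2)) ^ 4 := by ring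
        rw [e, e']
        have : 0 ≤ ((t - (a - h / 2)) + h) ^ 4 - 27 * (t - (a - h / 2)) ^ 4 := by linarith
        linarith)
      (fun t ht => hGM t ⟨hm1.1.trans ht.1, ht.2.trans ha.2⟩)
    have hval : ∫ t in (a - h / 2)..a, ((a - 3 * h / 2 - t) ^ 4 - 27 * (a - h / 2 - t) ^ 4) / 24
        = 23 * h ^ 5 / 480 := by
      rw [integral_quart2]; ring
    rw [hval] at hb
    exact hb
  have e1 : |∫ t in (a - h / 2)..(a - 3 * h / 2), (a - 3 * h / 2 - t) ^ 4 / 24 * G t|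
      ≤ M * (h ^ 5 / 120) := by
    rw [show (∫ t in (a - h / 2)..(a - 3 * h / 2), (a - 3 * h / 2 - t) ^ 4 / 24 * G t)
      = -(∫ t in (a - 3 * h / 2)..(a - h / 2), (a - 3 * h / 2 - t) ^ 4 / 24 * G t)
      from intervalIntegral.integral_symm _ _, abs_neg]
    have hb := bound_piece (k := fun t => (a - 3 * h / 2 - t) ^ 4 / 24) (G := G) (M := M)
      (show a - 3 * h / 2 ≤ a - h / 2 by linarith) (by fun_prop) hGc
      (fun t ht => by
        show 0 ≤ (a - 3 * h / 2 - t) ^ 4 / 24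
        positivity)
      (fun t ht => hGM t ⟨hm3.1.trans ht.1, ht.2.trans hm1.2⟩)
    have hval : ∫ t in (a - 3 * h / 2)..(a - h / 2), (a - 3 * h / 2 - t) ^ 4 / 24
        = h ^ 5 / 120 := by
      rw [integral_quart_div]; ring
    rw [hval] at hb
    exact hb
  -- assemble
  rw [hEeq, abs_div, abs_of_pos (show (0:ℝ) < 24 * h by linarith),
    div_le_iff₀ (show (0:ℝ) < 24 * h by linarith)]
  have hN : Q (a + 3 * h / 2) - Q (a - 3 * h / 2) - 27 * (Q (a + h / 2) - Q (a - h / 2))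
      = ((∫ t in a..(a + h / 2), ((a + 3 * h / 2 - t) ^ 4 - 27 * (a + h / 2 - t) ^ 4) / 24 * G t)
        + ∫ t in (a + h / 2)..(a + 3 * h / 2), (a + 3 * h / 2 - t) ^ 4 / 24 * G t)
        - ((∫ t in a..(a - h / 2), ((a - 3 * h / 2 - t) ^ 4 - 27 * (a - h / 2 - t) ^ 4) / 24 * G t)
        + ∫ t in (a - h / 2)..(a - 3 * h / 2), (a - 3 * h / 2 - t) ^ 4 / 24 * G t) := by
    rw [← C3, ← C2]
    rw [S1, S2]
    ring
  rw [hN]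
  have htot : 3 / 640 * h ^ 4 * M * (24 * h)
      = M * (23 * h ^ 5 / 480) + M * (h ^ 5 / 120) + (M * (23 * h ^ 5 / 480) + M * (h ^ 5 / 120)) := by
    ring
  rw [htot]
  have a3 := abs_le.mp e3
  have a4 := abs_le.mp e4
  have a2 := abs_le.mp e2
  have a1 := abs_le.mp e1
  rw [abs_le]
  constructor <;> linarith [a1.1, a1.2, a2.1, a2.2, a3.1, a3.2, a4.1, a4.2]
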